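/- Let γ ∈ ℝ³ be a probability vector (γ_i ≥ 0, γ₁+γ₂+γ₃ = 1) with γ_i ≤ 2/3 for every i. Then there exist unit vectors ψ₁, ψ₂, ψ₃ ∈ ℂ² and nonnegative reals α₁, α₂, α₃ such that ∑_{i=1}^{3} α_i (I − ψ_i ψ_i*) = I (the 2×2 identity), and for every k ∈ {1,2,3}: (1/3)·∑_{i=1}^{3} α_k ⟨ψ_i, (I − ψ_k ψ_k*) ψ_i⟩ = γ_k. (Note that the i = k term vanishes automatically, so the induced visit matrix has zero diagonal.) -/

import Mathlib

set_option maxHeartbeats 1000000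

open Matrix

/-- The rank-one matrix `ψψ*` (the orthogonal projection onto `ψ` when `ψ` is a unit
vector of `ℂ²`). -/
def projOnto (ψ : Fin 2 → ℂ) : Matrix (Fin 2) (Fin 2) ℂ :=
  fun a b => ψ a * star (ψ b)



/-- half-angle construction -/
lemma half_angle (c s : ℝ) (h : c^2 + s^2 = 1) :
    ∃ x y : ℝ, x^2 + y^2 = 1 ∧ x^2 - y^2 = c ∧ 2*x*y = s := by
  rcases eq_or_ne c (-1) with hc | hc
  · have hs : s = 0 := by
      have : s^2 = 0 := by nlinarith
      exact pow_eq_zero_iff (n := 2) (by norm_num) |>.mp this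
    exact ⟨0, 1, by norm_num, by norm_num [hc], by norm_num [hs]⟩
  · have hc1 : -1 ≤ c := by nlinarith
    have hpos : 0 < (1+c)/2 := by
      rcases lt_or_eq_of_le hc1 with h' | h'
      · linarith
      · exact absurd h'.symm hc
    set x := Real.sqrt ((1+c)/2) with hxdef
    have hx2 : x^2 = (1+c)/2 := Real.sq_sqrt hpos.le
    have hx0 : 0 < x := Real.sqrt_pos.mpr hpos
    refine ⟨x, s/(2*x), ?_, ?_, ?_⟩
    · field_simp
      nlinarith [hx2]
    · field_simp
      nlinarith [hx2]
    · field_simp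

lemma prob_of_star (γ1 γ2 γ3 a1 a2 a3 c1 s1 c2 s2 c3 s3 : ℝ)
    (hn1 : c1^2+s1^2=1) (hn2 : c2^2+s2^2=1) (hn3 : c3^2+s3^2=1)
    (ha : a1+a2+a3 = 2)
    (hc : a1*c1+a2*c2+a3*c3 = 0) (hs : a1*s1+a2*s2+a3*s3 = 0)
    (h1 : 0 < a1) (h2 : 0 < a2) (h3 : 0 < a3)
    (st1 : a1*(2-a1) - (a2-a3)^2 = 6*γ1*(a2*a3))
    (st2 : a2*(2-a2) - (a1-a3)^2 = 6*γ2*(a1*a3))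
    (st3 : a3*(2-a3) - (a1-a2)^2 = 6*γ3*(a1*a2)) :
    a1*(3-(c1*(c1+c2+c3)+s1*(s1+s2+s3))) = 6*γ1 ∧
    a2*(3-(c2*(c1+c2+c3)+s2*(s1+s2+s3))) = 6*γ2 ∧
    a3*(3-(c3*(c1+c2+c3)+s3*(s1+s2+s3))) = 6*γ3 := by
  have hd12 : 2*(a1*a2)*(c1*c2+s1*s2) = a3^2-a1^2-a2^2 := by
    linear_combination (a1*c1+a2*c2-a3*c3)*hc + (a1*s1+a2*s2-a3*s3)*hs
      - a1^2*hn1 - a2^2*hn2 + a3^2*hn3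
  have hd13 : 2*(a1*a3)*(c1*c3+s1*s3) = a2^2-a1^2-a3^2 := by
    linear_combination (a1*c1+a3*c3-a2*c2)*hc + (a1*s1+a3*s3-a2*s2)*hs
      - a1^2*hn1 - a3^2*hn3 + a2^2*hn2
  have hd23 : 2*(a2*a3)*(c2*c3+s2*s3) = a1^2-a2^2-a3^2 := by
    linear_combination (a2*c2+a3*c3-a1*c1)*hc + (a2*s2+a3*s3-a1*s1)*hs
      - a2^2*hn2 - a3^2*hn3 + a1^2*hn1
  refine ⟨?_, ?_, ?_⟩
  · apply mul_left_cancel₀ (a := 2*(a2*a3)) (by positivity)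
    linear_combination 2*st1 + (2*a1 + a1*a2 + a1*a3 - (a2-a3)^2)*ha
      - a3*hd12 - a2*hd13 - 2*(a1*a2*a3)*hn1
  · apply mul_left_cancel₀ (a := 2*(a1*a3)) (by positivity)
    linear_combination 2*st2 + (2*a2 + a2*a1 + a2*a3 - (a1-a3)^2)*ha
      - a3*hd12 - a1*hd23 - 2*(a1*a2*a3)*hn2
  · apply mul_left_cancel₀ (a := 2*(a1*a2)) (by positivity)
    linear_combination 2*st3 + (2*a3 + a3*a1 + a3*a2 - (a1-a2)^2)*ha
      - a2*hd13 - a1*hd23 - 2*(a1*a2*a3)*hn3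

lemma assemble (γ1 γ2 γ3 b1 b2 b3 : ℝ)
    (hp1 : 0 < b1) (hp2 : 0 < b2) (hp3 : 0 < b3)
    (hst1 : (b2+b3)*((b1+b2+b3)+b1) - (b3-b2)^2 = 6*γ1*((b1+b3)*(b1+b2)))
    (hst2 : (b1+b3)*((b1+b2+b3)+b2) - (b3-b1)^2 = 6*γ2*((b2+b3)*(b1+b2)))
    (hst3 : (b1+b2)*((b1+b2+b3)+b3) - (b2-b1)^2 = 6*γ3*((b2+b3)*(b1+b3))) :
    ∃ c1 s1 c2 s2 c3 s3 a1 a2 a3 : ℝ,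
      0 ≤ a1 ∧ 0 ≤ a2 ∧ 0 ≤ a3 ∧
      c1^2+s1^2 = 1 ∧ c2^2+s2^2 = 1 ∧ c3^2+s3^2 = 1 ∧
      a1+a2+a3 = 2 ∧ a1*c1+a2*c2+a3*c3 = 0 ∧ a1*s1+a2*s2+a3*s3 = 0 ∧
      a1*(3-(c1*(c1+c2+c3)+s1*(s1+s2+s3))) = 6*γ1 ∧
      a2*(3-(c2*(c1+c2+c3)+s2*(s1+s2+s3))) = 6*γ2 ∧
      a3*(3-(c3*(c1+c2+c3)+s3*(s1+s2+s3))) = 6*γ3 := by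
  have hS : (0:ℝ) < b1+b2+b3 := by positivity
  have hA1 : (0:ℝ) < b2+b3 := by positivity
  have hA2 : (0:ℝ) < b1+b3 := by positivity
  have hA3 : (0:ℝ) < b1+b2 := by positivity
  have hRnn : 0 ≤ (b1+b2+b3)*(b1*(b2*b3)) := by positivity
  set R : ℝ := Real.sqrt ((b1+b2+b3)*(b1*(b2*b3))) with hRdef
  have hR0 : 0 ≤ R := Real.sqrt_nonneg _
  have hR2 : R^2 = (b1+b2+b3)*(b1*(b2*b3)) := Real.sq_sqrt hRnn
  have hn1 : (1:ℝ)^2 + (0:ℝ)^2 = 1 := by norm_num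
  have hn2 : (((b1+b2)^2-(b2+b3)^2-(b1+b3)^2)/(2*((b2+b3)*(b1+b3))))^2
      + (2*R/((b2+b3)*(b1+b3)))^2 = 1 := by
    field_simp
    linear_combination 16*hR2
  have hn3 : (((b1+b3)^2-(b2+b3)^2-(b1+b2)^2)/(2*((b2+b3)*(b1+b2))))^2
      + (-(2*R)/((b2+b3)*(b1+b2)))^2 = 1 := by
    field_simp
    linear_combination 16*hR2
  have ha : (b2+b3)/(b1+b2+b3) + (b1+b3)/(b1+b2+b3) + (b1+b2)/(b1+b2+b3) = 2 := by
    field_simp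
    ring
  have hcc : (b2+b3)/(b1+b2+b3) * 1
      + (b1+b3)/(b1+b2+b3) * (((b1+b2)^2-(b2+b3)^2-(b1+b3)^2)/(2*((b2+b3)*(b1+b3))))
      + (b1+b2)/(b1+b2+b3) * (((b1+b3)^2-(b2+b3)^2-(b1+b2)^2)/(2*((b2+b3)*(b1+b2)))) = 0 := by
    field_simp
    ring
  have hss : (b2+b3)/(b1+b2+b3) * 0
      + (b1+b3)/(b1+b2+b3) * (2*R/((b2+b3)*(b1+b3)))
      + (b1+b2)/(b1+b2+b3) * (-(2*R)/((b2+b3)*(b1+b2))) = 0 := by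
    field_simp
    ring
  have st1 : ((b2+b3)/(b1+b2+b3))*(2-(b2+b3)/(b1+b2+b3))
      - ((b1+b3)/(b1+b2+b3)-(b1+b2)/(b1+b2+b3))^2
      = 6*γ1*(((b1+b3)/(b1+b2+b3))*((b1+b2)/(b1+b2+b3))) := by
    field_simp
    linear_combination hst1
  have st2 : ((b1+b3)/(b1+b2+b3))*(2-(b1+b3)/(b1+b2+b3))
      - ((b2+b3)/(b1+b2+b3)-(b1+b2)/(b1+b2+b3))^2
      = 6*γ2*(((b2+b3)/(b1+b2+b3))*((b1+b2)/(b1+b2+b3))) := by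
    field_simp
    linear_combination hst2
  have st3 : ((b1+b2)/(b1+b2+b3))*(2-(b1+b2)/(b1+b2+b3))
      - ((b2+b3)/(b1+b2+b3)-(b1+b3)/(b1+b2+b3))^2
      = 6*γ3*(((b2+b3)/(b1+b2+b3))*((b1+b3)/(b1+b2+b3))) := by
    field_simp
    linear_combination hst3
  obtain ⟨p1, p2, p3⟩ := prob_of_star γ1 γ2 γ3 _ _ _ _ _ _ _ _ _ hn1 hn2 hn3 ha hcc hss
    (by positivity) (by positivity) (by positivity) st1 st2 st3
  exact ⟨1, 0, _, _, _, _, _, _, _, by positivity, by positivity, by positivity,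
    hn1, hn2, hn3, ha, hcc, hss, p1, p2, p3⟩

lemma key (γ1 γ2 γ3 : ℝ) (h10 : 0 ≤ γ1) (h20 : 0 ≤ γ2) (h30 : 0 ≤ γ3)
    (hsum : γ1+γ2+γ3 = 1) (h12 : γ1 ≤ 2/3) (h22 : γ2 ≤ 2/3) (h32 : γ3 ≤ 2/3) :
    ∃ c1 s1 c2 s2 c3 s3 a1 a2 a3 : ℝ,
      0 ≤ a1 ∧ 0 ≤ a2 ∧ 0 ≤ a3 ∧
      c1^2+s1^2 = 1 ∧ c2^2+s2^2 = 1 ∧ c3^2+s3^2 = 1 ∧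
      a1+a2+a3 = 2 ∧ a1*c1+a2*c2+a3*c3 = 0 ∧ a1*s1+a2*s2+a3*s3 = 0 ∧
      a1*(3-(c1*(c1+c2+c3)+s1*(s1+s2+s3))) = 6*γ1 ∧
      a2*(3-(c2*(c1+c2+c3)+s2*(s1+s2+s3))) = 6*γ2 ∧
      a3*(3-(c3*(c1+c2+c3)+s3*(s1+s2+s3))) = 6*γ3 := by
  rcases eq_or_lt_of_le h10 with h1z | h1p
  · have hσ : (0:ℝ) ≤ 1 - (3-6*γ2)^2 := by nlinarith
    have hσ2 : (Real.sqrt (1 - (3-6*γ2)^2))^2 = 1 - (3-6*γ2)^2 := Real.sq_sqrt hσ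
    exact ⟨3-6*γ2, Real.sqrt (1 - (3-6*γ2)^2), 1, 0, -1, 0, 0, 1, 1,
      by norm_num, by norm_num, by norm_num,
      by linarith, by norm_num, by norm_num, by norm_num, by ring, by ring,
      by rw [← h1z]; ring, by ring, by linarith⟩
  rcases eq_or_lt_of_le h20 with h2z | h2p
  · have hσ : (0:ℝ) ≤ 1 - (3-6*γ1)^2 := by nlinarith
    have hσ2 : (Real.sqrt (1 - (3-6*γ1)^2))^2 = 1 - (3-6*γ1)^2 := Real.sq_sqrt hσ
    exact ⟨1, 0, 3-6*γ1, Real.sqrt (1 - (3-6*γ1)^2), -1, 0, 1, 0, 1,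
      by norm_num, by norm_num, by norm_num,
      by norm_num, by linarith, by norm_num, by norm_num, by ring, by ring,
      by ring, by rw [← h2z]; ring, by linarith⟩
  rcases eq_or_lt_of_le h30 with h3z | h3p
  · have hσ : (0:ℝ) ≤ 1 - (3-6*γ1)^2 := by nlinarith
    have hσ2 : (Real.sqrt (1 - (3-6*γ1)^2))^2 = 1 - (3-6*γ1)^2 := Real.sq_sqrt hσ
    exact ⟨1, 0, -1, 0, 3-6*γ1, Real.sqrt (1 - (3-6*γ1)^2), 1, 1, 0,
      by norm_num, by norm_num, by norm_num,
      by norm_num, by norm_num, by linarith, by norm_num, by ring, by ring,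
      by ring, by linarith, by rw [← h3z]; ring⟩
  rcases eq_or_lt_of_le h12 with h1t | h1t
  · exact ⟨1, 0, -1, 0, -1, 0, 1, 3*γ2, 3*γ3,
      by norm_num, by linarith, by linarith,
      by norm_num, by norm_num, by norm_num, by linarith, by linarith, by ring,
      by linarith, by ring, by ring⟩
  rcases eq_or_lt_of_le h22 with h2t | h2t
  · exact ⟨-1, 0, 1, 0, -1, 0, 3*γ1, 1, 3*γ3,
      by linarith, by norm_num, by linarith,
      by norm_num, by norm_num, by norm_num, by linarith, by linarith, by ring,
      by ring, by linarith, by ring⟩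
  rcases eq_or_lt_of_le h32 with h3t | h3t
  · exact ⟨-1, 0, -1, 0, 1, 0, 3*γ1, 3*γ2, 1,
      by linarith, by linarith, by norm_num,
      by norm_num, by norm_num, by norm_num, by linarith, by linarith, by ring,
      by ring, by ring, by linarith⟩
  -- main case : all γ strictly inside (0, 2/3)
  set f : ℝ → ℝ := fun t => t*(t+3*γ2-1)*(t+1-3*γ1) - (1-t)*(2-3*γ2-t)*(3*γ1-t) with hfdef
  have hcont : Continuous f := by fun_prop
  set L : ℝ := max (max 0 (1-3*γ2)) (3*γ1-1) with hLdef
  set U : ℝ := min (min 1 (3*γ1)) (2-3*γ2) with hUdef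
  have hLU : L ≤ U := by
    rw [hLdef, hUdef]
    refine max_le (max_le ?_ ?_) ?_ <;> refine le_min (le_min ?_ ?_) ?_ <;> linarith
  have hfL : f L < 0 := by
    rcases max_cases (max 0 (1-3*γ2)) (3*γ1-1) with ⟨he, _⟩ | ⟨he, _⟩
    · rw [hLdef, he]
      rcases max_cases (0:ℝ) (1-3*γ2) with ⟨he2, _⟩ | ⟨he2, _⟩ <;> rw [he2] <;>
        simp only [hfdef] <;> nlinarith
    · rw [hLdef, he]
      simp only [hfdef]
      nlinarith
  have hfU : (0:ℝ) < f U := by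
    rcases min_cases (min 1 (3*γ1)) (2-3*γ2) with ⟨he, _⟩ | ⟨he, _⟩
    · rw [hUdef, he]
      rcases min_cases (1:ℝ) (3*γ1) with ⟨he2, _⟩ | ⟨he2, _⟩ <;> rw [he2] <;>
        simp only [hfdef] <;> nlinarith
    · rw [hUdef, he]
      simp only [hfdef]
      nlinarith
  have hsub := intermediate_value_Icc hLU hcont.continuousOn
  obtain ⟨tv, htv, hft⟩ := hsub ⟨hfL.le, hfU.le⟩
  have htL : L < tv := by
    rcases eq_or_lt_of_le htv.1 with h | h
    · exfalso; rw [← h] at hft; linarith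
    · exact h
  have htU : tv < U := by
    rcases eq_or_lt_of_le htv.2 with h | h
    · exfalso; rw [h] at hft; linarith
    · exact h
  have ht0 : 0 < tv := lt_of_le_of_lt (le_trans (le_max_left 0 (1-3*γ2)) (le_max_left _ _)) htL
  have ht1 : tv < 1 := lt_of_lt_of_le htU (le_trans (min_le_left _ _) (min_le_left 1 (3*γ1)))
  have htA : tv < 3*γ1 := lt_of_lt_of_le htU (le_trans (min_le_left _ _) (min_le_right 1 (3*γ1)))
  have htA1 : 3*γ1-1 < tv := lt_of_le_of_lt (le_max_right _ _) htL
  have hgt : tv*(tv+3*γ2-1)*(tv+1-3*γ1) - (1-tv)*(2-3*γ2-tv)*(3*γ1-tv) = 0 := hft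
  have hb1 : (0:ℝ) < (1-tv)*(1-3*γ1+tv) := by nlinarith
  have hb2 : (0:ℝ) < tv*(1-3*γ1+tv) := by nlinarith
  have hb3 : (0:ℝ) < (1-tv)*(3*γ1-tv) := by nlinarith
  apply assemble γ1 γ2 γ3 _ _ _ hb1 hb2 hb3
  · linear_combination 0*hgt
  · linear_combination (2*(3*γ1-1-tv))*hgt
  · linear_combination (2*(1-tv))*hgt
      - 6*(((tv*(1-3*γ1+tv))+((1-tv)*(3*γ1-tv)))*(((1-tv)*(1-3*γ1+tv))+((1-tv)*(3*γ1-tv))))*hsum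

/-- **Quantum winnability.** Every game `H³(γ)` in the physically allowed polytope
(probability vector with every `γ_i ≤ 2/3`) is perfectly winnable with one qubit:
there are pure encoding states `ψ_i` and a POVM with effects `α_i (I − ψ_i ψ_i*)`
whose visit probabilities have zero diagonal and column averages `γ`. -/
theorem quantum_perfect_win
    (γ : Fin 3 → ℝ) (hγ0 : ∀ i, 0 ≤ γ i) (hγ1 : ∑ i, γ i = 1)
    (hγ2 : ∀ i, γ i ≤ 2/3) :
    ∃ (ψ : Fin 3 → (Fin 2 → ℂ)) (α : Fin 3 → ℝ),
      (∀ i, star (ψ i) ⬝ᵥ ψ i = 1) ∧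
      (∀ i, 0 ≤ α i) ∧
      (∑ i, α i • ((1 : Matrix (Fin 2) (Fin 2) ℂ) - projOnto (ψ i))
        = (1 : Matrix (Fin 2) (Fin 2) ℂ)) ∧
      (∀ k, (1/3 : ℂ) * ∑ i, (α k : ℂ) *
          (star (ψ i) ⬝ᵥ (((1 : Matrix (Fin 2) (Fin 2) ℂ) - projOnto (ψ k)) *ᵥ ψ i))
        = (γ k : ℂ)) := by
  have hγsum : γ 0 + γ 1 + γ 2 = 1 := by rw [Fin.sum_univ_three] at hγ1; exact hγ1
  obtain ⟨c1, s1, c2, s2, c3, s3, a1, a2, a3, ha1, ha2, ha3, hn1, hn2, hn3,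
      hasum, hcc, hss, hp1, hp2, hp3⟩ :=
    key (γ 0) (γ 1) (γ 2) (hγ0 0) (hγ0 1) (hγ0 2) hγsum (hγ2 0) (hγ2 1) (hγ2 2)
  obtain ⟨x1, y1, hxy1, hc1, hs1⟩ := half_angle c1 s1 hn1
  obtain ⟨x2, y2, hxy2, hc2, hs2⟩ := half_angle c2 s2 hn2
  obtain ⟨x3, y3, hxy3, hc3, hs3⟩ := half_angle c3 s3 hn3
  simp only [← hc1, ← hc2, ← hc3, ← hs1, ← hs2, ← hs3] at hcc hss hp1 hp2 hp3
  -- real entry identities for the POVM condition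
  have he00 : a1*(1-x1*x1)+a2*(1-x2*x2)+a3*(1-x3*x3) = 1 := by
    linear_combination (1/2)*hasum - (1/2)*hcc - (a1/2)*hxy1 - (a2/2)*hxy2 - (a3/2)*hxy3
  have he01 : a1*(x1*y1)+a2*(x2*y2)+a3*(x3*y3) = 0 := by
    linear_combination (1/2)*hss
  have he11 : a1*(1-y1*y1)+a2*(1-y2*y2)+a3*(1-y3*y3) = 1 := by
    linear_combination (1/2)*hasum + (1/2)*hcc - (a1/2)*hxy1 - (a2/2)*hxy2 - (a3/2)*hxy3
  -- complex casts
  have Hxy1 : (x1:ℂ)^2+(y1:ℂ)^2 = 1 := by exact_mod_cast hxy1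
  have Hxy2 : (x2:ℂ)^2+(y2:ℂ)^2 = 1 := by exact_mod_cast hxy2
  have Hxy3 : (x3:ℂ)^2+(y3:ℂ)^2 = 1 := by exact_mod_cast hxy3
  have H1 : (a1:ℂ)*(3 - (((x1:ℂ)^2-(y1:ℂ)^2)*(((x1:ℂ)^2-(y1:ℂ)^2)+((x2:ℂ)^2-(y2:ℂ)^2)+((x3:ℂ)^2-(y3:ℂ)^2))
      + (2*(x1:ℂ)*(y1:ℂ))*((2*(x1:ℂ)*(y1:ℂ))+(2*(x2:ℂ)*(y2:ℂ))+(2*(x3:ℂ)*(y3:ℂ))))) = 6*((γ 0:ℝ):ℂ) := by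
    exact_mod_cast hp1
  have H2 : (a2:ℂ)*(3 - (((x2:ℂ)^2-(y2:ℂ)^2)*(((x1:ℂ)^2-(y1:ℂ)^2)+((x2:ℂ)^2-(y2:ℂ)^2)+((x3:ℂ)^2-(y3:ℂ)^2))
      + (2*(x2:ℂ)*(y2:ℂ))*((2*(x1:ℂ)*(y1:ℂ))+(2*(x2:ℂ)*(y2:ℂ))+(2*(x3:ℂ)*(y3:ℂ))))) = 6*((γ 1:ℝ):ℂ) := by
    exact_mod_cast hp2
  have H3 : (a3:ℂ)*(3 - (((x3:ℂ)^2-(y3:ℂ)^2)*(((x1:ℂ)^2-(y1:ℂ)^2)+((x2:ℂ)^2-(y2:ℂ)^2)+((x3:ℂ)^2-(y3:ℂ)^2))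
      + (2*(x3:ℂ)*(y3:ℂ))*((2*(x1:ℂ)*(y1:ℂ))+(2*(x2:ℂ)*(y2:ℂ))+(2*(x3:ℂ)*(y3:ℂ))))) = 6*((γ 2:ℝ):ℂ) := by
    exact_mod_cast hp3
  refine ⟨![![(x1:ℂ),(y1:ℂ)], ![(x2:ℂ),(y2:ℂ)], ![(x3:ℂ),(y3:ℂ)]], ![a1,a2,a3],
    ?_, ?_, ?_, ?_⟩
  · intro i
    fin_cases i <;>
      simp [dotProduct, Fin.sum_univ_two, Complex.star_def, Complex.conj_ofReal] <;>
      norm_cast <;> [linear_combination hxy1; linear_combination hxy2; linear_combination hxy3]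
  · intro i
    fin_cases i <;> simpa using ‹_›
  · rw [Fin.sum_univ_three]
    ext a b
    fin_cases a <;> fin_cases b <;>
      simp [projOnto, Matrix.smul_apply, Matrix.sub_apply, Matrix.one_apply,
        Complex.star_def, Complex.conj_ofReal, Complex.real_smul] <;>
      norm_cast <;> linear_combination -he01
  · intro k
    fin_cases k <;>
      [skip; skip; skip] <;>
    · rw [Fin.sum_univ_three]
      simp only [projOnto, Matrix.mulVec, dotProduct, Fin.sum_univ_two,
        Matrix.sub_apply, Matrix.one_apply, Matrix.cons_val_zero, Matrix.cons_val_one,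
        Matrix.head_cons, Pi.star_apply, Complex.star_def, Complex.conj_ofReal,
        Fin.isValue, Matrix.cons_val_two, Matrix.tail_cons, Fin.reduceFinMk]
      norm_num
      first
      | linear_combination (1/6)*H1
          + ((a1:ℂ)/6)*(Hxy1+Hxy2+Hxy3) - ((a1:ℂ)/2)*Hxy1
          - ((a1:ℂ)/6)*((x1:ℂ)^2+(y1:ℂ)^2+(x2:ℂ)^2+(y2:ℂ)^2+(x3:ℂ)^2+(y3:ℂ)^2-3)*Hxy1
      | linear_combination (1/6)*H2
          + ((a2:ℂ)/6)*(Hxy1+Hxy2+Hxy3) - ((a2:ℂ)/2)*Hxy2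
          - ((a2:ℂ)/6)*((x1:ℂ)^2+(y1:ℂ)^2+(x2:ℂ)^2+(y2:ℂ)^2+(x3:ℂ)^2+(y3:ℂ)^2-3)*Hxy2
      | linear_combination (1/6)*H3
          + ((a3:ℂ)/6)*(Hxy1+Hxy2+Hxy3) - ((a3:ℂ)/2)*Hxy3
          - ((a3:ℂ)/6)*((x1:ℂ)^2+(y1:ℂ)^2+(x2:ℂ)^2+(y2:ℂ)^2+(x3:ℂ)^2+(y3:ℂ)^2-3)*Hxy3
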